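/- Let U, Û ∈ O_{p,r} and let U_⊥ be an orthogonal complement of U. Then there exists R ∈ O_r such that ‖ÛᵀU − R‖_F ≤ min{ ‖U_⊥ᵀÛ‖_F², sqrt(r)·‖U_⊥ᵀÛ‖² }. -/

import Mathlib

open Matrix

/-- Spectral (operator) norm of a real matrix. -/
noncomputable def spec {m n : ℕ} (A : Matrix (Fin m) (Fin n) ℝ) : ℝ :=
  sSup {c : ℝ | ∃ v : Fin n → ℝ, (∑ j, v j ^ 2) ≤ 1 ∧
    c = Real.sqrt (∑ i, (A.mulVec v i) ^ 2)}

/-- Frobenius norm of a real matrix. -/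
noncomputable def frob {m n : ℕ} (A : Matrix (Fin m) (Fin n) ℝ) : ℝ :=
  Real.sqrt (∑ i, ∑ j, (A i j) ^ 2)

lemma frob_nonneg {m n : ℕ} (A : Matrix (Fin m) (Fin n) ℝ) : 0 ≤ frob A :=
  Real.sqrt_nonneg _

lemma frob_sq {m n : ℕ} (A : Matrix (Fin m) (Fin n) ℝ) :
    frob A ^ 2 = ∑ i, ∑ j, (A i j) ^ 2 :=
  Real.sq_sqrt (Finset.sum_nonneg fun i _ => Finset.sum_nonneg fun j _ => sq_nonneg _)

lemma frob_sq_eq_trace {m n : ℕ} (A : Matrix (Fin m) (Fin n) ℝ) :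
    frob A ^ 2 = (Aᵀ * A).trace := by
  rw [frob_sq, Matrix.trace]
  simp only [Matrix.diag_apply, Matrix.mul_apply, Matrix.transpose_apply]
  rw [Finset.sum_comm]
  simp [sq]

lemma spec_nonneg {m n : ℕ} (A : Matrix (Fin m) (Fin n) ℝ)
    (hbdd : BddAbove {c : ℝ | ∃ v : Fin n → ℝ, (∑ j, v j ^ 2) ≤ 1 ∧
      c = Real.sqrt (∑ i, (A.mulVec v i) ^ 2)}) : 0 ≤ spec A := by
  apply le_csSup hbdd
  refine ⟨0, by simp, by simp [Matrix.mulVec_zero]⟩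

lemma spec_bddAbove {m n : ℕ} (A : Matrix (Fin m) (Fin n) ℝ) :
    BddAbove {c : ℝ | ∃ v : Fin n → ℝ, (∑ j, v j ^ 2) ≤ 1 ∧
      c = Real.sqrt (∑ i, (A.mulVec v i) ^ 2)} := by
  refine ⟨frob A, ?_⟩
  rintro c ⟨v, hv, rfl⟩
  rw [frob]
  apply Real.sqrt_le_sqrt
  apply Finset.sum_le_sum
  intro i _
  calc (A.mulVec v i) ^ 2 = (∑ j, A i j * v j) ^ 2 := by rw [Matrix.mulVec, dotProduct]
    _ ≤ (∑ j, A i j ^ 2) * ∑ j, v j ^ 2 := Finset.sum_mul_sq_le_sq_mul_sq _ _ _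
    _ ≤ (∑ j, A i j ^ 2) * 1 := by
        apply mul_le_mul_of_nonneg_left hv (Finset.sum_nonneg fun j _ => sq_nonneg _)
    _ = ∑ j, A i j ^ 2 := mul_one _

lemma exists_svd {r : ℕ} (A : Matrix (Fin r) (Fin r) ℝ) :
    ∃ (Q W : Matrix (Fin r) (Fin r) ℝ) (σ : Fin r → ℝ),
      Qᵀ * Q = 1 ∧ Q * Qᵀ = 1 ∧ Wᵀ * W = 1 ∧ W * Wᵀ = 1 ∧ (∀ i, 0 ≤ σ i) ∧
      A = Q * Matrix.diagonal σ * Wᵀ := by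
  have hPSD : (A * Aᵀ).PosSemidef := by
    simpa [conjTranspose_eq_transpose_of_trivial] using
      Matrix.posSemidef_self_mul_conjTranspose A
  have hS : (A * Aᵀ).IsHermitian := hPSD.1
  set lam := hS.eigenvalues with hlam
  have hlam0 : ∀ i, 0 ≤ lam i := hPSD.eigenvalues_nonneg
  set Q : Matrix (Fin r) (Fin r) ℝ := (hS.eigenvectorUnitary : Matrix (Fin r) (Fin r) ℝ)
    with hQdef
  have hQ1 : Qᵀ * Q = 1 := by
    have := (Matrix.mem_unitaryGroup_iff'.mp hS.eigenvectorUnitary.2)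
    simpa [Matrix.star_eq_conjTranspose, conjTranspose_eq_transpose_of_trivial] using this
  have hQ2 : Q * Qᵀ = 1 := mul_eq_one_comm.mp hQ1
  have hspec : A * Aᵀ = Q * Matrix.diagonal lam * Qᵀ := by
    have := hS.spectral_theorem
    simpa [Matrix.star_eq_conjTranspose, conjTranspose_eq_transpose_of_trivial] using this
  set sig : Fin r → ℝ := fun i => Real.sqrt (lam i) with hsig
  have hsig0 : ∀ i, 0 ≤ sig i := fun i => Real.sqrt_nonneg _
  have hsigsq : ∀ i, sig i * sig i = lam i := fun i => Real.mul_self_sqrt (hlam0 i)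
  set N : Matrix (Fin r) (Fin r) ℝ := Aᵀ * Q with hNdef
  have hN : Nᵀ * N = Matrix.diagonal lam := by
    have : Nᵀ * N = Qᵀ * (A * Aᵀ) * Q := by
      simp [hNdef, Matrix.transpose_mul, Matrix.mul_assoc]
    rw [this, hspec]
    calc Qᵀ * (Q * Matrix.diagonal lam * Qᵀ) * Q
        = (Qᵀ * Q) * Matrix.diagonal lam * (Qᵀ * Q) := by
          simp only [Matrix.mul_assoc]
      _ = Matrix.diagonal lam := by rw [hQ1]; simp
  have hNentry : ∀ i j, ∑ k, N k i * N k j = Matrix.diagonal lam i j := by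
    intro i j
    have := congrFun (congrFun hN i) j
    simpa [Matrix.mul_apply, Matrix.transpose_apply] using this
  -- the candidate orthonormal columns
  set u : Fin r → EuclideanSpace ℝ (Fin r) :=
    fun i => (WithLp.equiv 2 (Fin r → ℝ)).symm (fun k => (sig i)⁻¹ * N k i) with hu
  have huk : ∀ i k, u i k = (sig i)⁻¹ * N k i := fun i k => rfl
  have hortho : Orthonormal ℝ (Set.restrict {i | lam i ≠ 0} u) := by
    rw [orthonormal_iff_ite]
    rintro ⟨i, hi⟩ ⟨j, hj⟩
    have hinner : (inner ℝ (u i) (u j) : ℝ) = (sig i)⁻¹ * (sig j)⁻¹ * ∑ k, N k i * N k j := by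
      rw [PiLp.inner_apply]
      simp only [huk, RCLike.inner_apply, conj_trivial, Finset.mul_sum]
      congr 1; ext k; ring
    by_cases hij : i = j
    · subst hij
      show inner ℝ (u i) (u i) = _
      simp only [Set.restrict_apply, hinner, hNentry, Matrix.diagonal_apply_eq]
      have : sig i ≠ 0 := by
        simp only [hsig]
        exact Real.sqrt_ne_zero'.mpr (lt_of_le_of_ne (hlam0 i) (Ne.symm hi))
      rw [if_pos trivial, ← hsigsq i]
      field_simp
    · have : (⟨i, hi⟩ : {i | lam i ≠ 0}) ≠ ⟨j, hj⟩ := by simpa using hij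
      rw [if_neg this]
      show inner ℝ (u i) (u j) = _
      simp only [Set.restrict_apply, hinner, hNentry, Matrix.diagonal_apply_ne _ hij, mul_zero]
  obtain ⟨b, hb⟩ := hortho.exists_orthonormalBasis_extension_of_card_eq
    (by simp [finrank_euclideanSpace_fin])
  set W : Matrix (Fin r) (Fin r) ℝ := Matrix.of (fun k i => b i k) with hWdef
  have hW1 : Wᵀ * W = 1 := by
    ext i j
    have : (inner ℝ (b i) (b j) : ℝ) = if i = j then 1 else 0 :=
      orthonormal_iff_ite.mp b.orthonormal i j
    rw [PiLp.inner_apply] at this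
    simp only [RCLike.inner_apply, conj_trivial] at this
    simp only [Matrix.mul_apply, Matrix.transpose_apply, hWdef, Matrix.of_apply,
      Matrix.one_apply]
    rw [← this]
    exact Finset.sum_congr rfl fun _ _ => mul_comm _ _
  have hW2 : W * Wᵀ = 1 := mul_eq_one_comm.mp hW1
  have hNW : N = W * Matrix.diagonal sig := by
    ext k i
    rw [Matrix.mul_diagonal]
    by_cases hi : lam i = 0
    · have hzero : N k i = 0 := by
        have hsum : ∑ k, N k i * N k i = 0 := by
          rw [hNentry i i]; simp [hi]
        have := Finset.sum_eq_zero_iff_of_nonneg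
          (fun k _ => mul_self_nonneg (N k i)) |>.mp hsum k (Finset.mem_univ k)
        exact mul_self_eq_zero.mp this
      have : sig i = 0 := by simp [hsig, hi]
      rw [hzero, this, mul_zero]
    · have hbi : b i = u i := hb i hi
      have : W k i = (sig i)⁻¹ * N k i := by
        simp only [hWdef, Matrix.of_apply, hbi, huk]
      rw [this]
      have hsigne : sig i ≠ 0 := by
        simp only [hsig]
        exact Real.sqrt_ne_zero'.mpr (lt_of_le_of_ne (hlam0 i) (Ne.symm hi))
      field_simp
  have hAt : Aᵀ = W * Matrix.diagonal sig * Qᵀ := by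
    have : Aᵀ = N * Qᵀ := by
      rw [hNdef, Matrix.mul_assoc, hQ2, Matrix.mul_one]
    rw [this, hNW]
  have hA : A = Q * Matrix.diagonal sig * Wᵀ := by
    have := congrArg Matrix.transpose hAt
    simpa [Matrix.transpose_mul, Matrix.transpose_transpose, Matrix.diagonal_transpose,
      Matrix.mul_assoc] using this
  exact ⟨Q, W, sig, hQ1, hQ2, hW1, hW2, hsig0, hA⟩

lemma trace_conj {r : ℕ} (Q W : Matrix (Fin r) (Fin r) ℝ) (d : Fin r → ℝ)
    (hQ1 : Qᵀ * Q = 1) (hW1 : Wᵀ * W = 1) :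
    ((Q * Matrix.diagonal d * Wᵀ)ᵀ * (Q * Matrix.diagonal d * Wᵀ)).trace = ∑ i, d i ^ 2 := by
  have h1 : (Q * Matrix.diagonal d * Wᵀ)ᵀ * (Q * Matrix.diagonal d * Wᵀ)
      = W * (Matrix.diagonal d * Matrix.diagonal d) * Wᵀ := by
    calc (Q * Matrix.diagonal d * Wᵀ)ᵀ * (Q * Matrix.diagonal d * Wᵀ)
        = W * ((Matrix.diagonal d)ᵀ * ((Qᵀ * Q) * (Matrix.diagonal d * Wᵀ))) := by
          simp only [Matrix.transpose_mul, Matrix.transpose_transpose, Matrix.mul_assoc]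
      _ = W * (Matrix.diagonal d * Matrix.diagonal d) * Wᵀ := by
          rw [hQ1, Matrix.one_mul, Matrix.diagonal_transpose, Matrix.mul_assoc, Matrix.mul_assoc]
  rw [h1, Matrix.trace_mul_cycle, ← Matrix.mul_assoc, hW1, Matrix.one_mul,
    Matrix.diagonal_mul_diagonal, Matrix.trace_diagonal]
  simp [sq]

/-- For `U, Û ∈ O_{p,r}` and `U_⊥` an orthogonal complement of `U`, there is an
orthogonal `R ∈ O_r` with `‖ÛᵀU − R‖_F ≤ min{‖U_⊥ᵀÛ‖_F², √r·‖U_⊥ᵀÛ‖²}`. -/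
theorem stmt3 (p r : ℕ) (U Uhat : Matrix (Fin p) (Fin r) ℝ)
    (Uperp : Matrix (Fin p) (Fin (p - r)) ℝ)
    (hU : Uᵀ * U = 1) (hUhat : Uhatᵀ * Uhat = 1)
    (hUperp : Uperpᵀ * Uperp = 1) (horth : Uᵀ * Uperp = 0)
    (hcomplete : U * Uᵀ + Uperp * Uperpᵀ = 1) :
    ∃ R : Matrix (Fin r) (Fin r) ℝ, Rᵀ * R = 1 ∧ R * Rᵀ = 1 ∧
      frob (Uhatᵀ * U - R) ≤
        min (frob (Uperpᵀ * Uhat) ^ 2) (Real.sqrt r * spec (Uperpᵀ * Uhat) ^ 2) := by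
  set A := Uhatᵀ * U with hAdef
  set B := Uperpᵀ * Uhat with hBdef
  obtain ⟨Q, W, σ, hQ1, hQ2, hW1, hW2, hσ0, hA⟩ := exists_svd A
  have hkey : A * Aᵀ + Bᵀ * B = 1 := by
    have h1 : A * Aᵀ + Bᵀ * B = Uhatᵀ * ((U * Uᵀ + Uperp * Uperpᵀ) * Uhat) := by
      simp [hAdef, hBdef, Matrix.transpose_mul, Matrix.add_mul, Matrix.mul_add, Matrix.mul_assoc]
    rw [h1, hcomplete, Matrix.one_mul, hUhat]
  have hDD : A * Aᵀ = Q * Matrix.diagonal (fun i => σ i ^ 2) * Qᵀ := by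
    rw [hA]
    calc (Q * Matrix.diagonal σ * Wᵀ) * (Q * Matrix.diagonal σ * Wᵀ)ᵀ
        = Q * (Matrix.diagonal σ * ((Wᵀ * W) * ((Matrix.diagonal σ)ᵀ * Qᵀ))) := by
          simp only [Matrix.transpose_mul, Matrix.transpose_transpose, Matrix.mul_assoc]
      _ = Q * Matrix.diagonal (fun i => σ i ^ 2) * Qᵀ := by
          have hdd : (Matrix.diagonal σ * Matrix.diagonal σ : Matrix (Fin r) (Fin r) ℝ)
              = Matrix.diagonal (fun i => σ i ^ 2) := by
            rw [Matrix.diagonal_mul_diagonal]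
            congr 1
            ext i
            ring
          rw [hW1, Matrix.one_mul, Matrix.diagonal_transpose,
            ← Matrix.mul_assoc (Matrix.diagonal σ), hdd, ← Matrix.mul_assoc]
  have hBtB : Bᵀ * B = 1 - Q * Matrix.diagonal (fun i => σ i ^ 2) * Qᵀ := by
    rw [← hDD]
    exact eq_sub_of_add_eq' hkey
  have hQBBQ : (B * Q)ᵀ * (B * Q) = 1 - Matrix.diagonal (fun i => σ i ^ 2) := by
    calc (B * Q)ᵀ * (B * Q) = Qᵀ * (Bᵀ * B) * Q := by
          simp only [Matrix.transpose_mul, Matrix.mul_assoc]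
      _ = Qᵀ * (1 - Q * Matrix.diagonal (fun i => σ i ^ 2) * Qᵀ) * Q := by rw [hBtB]
      _ = Qᵀ * Q - (Qᵀ * Q) * Matrix.diagonal (fun i => σ i ^ 2) * (Qᵀ * Q) := by
          simp only [Matrix.mul_sub, Matrix.sub_mul, Matrix.mul_one, Matrix.mul_assoc]
      _ = 1 - Matrix.diagonal (fun i => σ i ^ 2) := by rw [hQ1]; simp
  have hcol : ∀ i, (∑ k, ((B * Q) k i) ^ 2) = 1 - σ i ^ 2 := by
    intro i
    have h := congrFun (congrFun hQBBQ i) i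
    simp only [Matrix.mul_apply, Matrix.transpose_apply, Matrix.sub_apply,
      Matrix.one_apply_eq, Matrix.diagonal_apply_eq] at h
    calc ∑ k, ((B * Q) k i) ^ 2
        = ∑ k, (∑ x, B k x * Q x i) * (∑ x, B k x * Q x i) := by
          simp [Matrix.mul_apply, sq]
      _ = 1 - σ i ^ 2 := h
  have hσle : ∀ i, σ i ^ 2 ≤ 1 := by
    intro i
    have : 0 ≤ 1 - σ i ^ 2 := by
      rw [← hcol i]; positivity
    linarith
  have hσ1 : ∀ i, σ i ≤ 1 := by
    intro i
    nlinarith [hσ0 i, hσle i]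
  have hQcol : ∀ i, ∑ k, (Q k i) ^ 2 = 1 := by
    intro i
    have h := congrFun (congrFun hQ1 i) i
    simp only [Matrix.mul_apply, Matrix.transpose_apply, Matrix.one_apply_eq] at h
    calc ∑ k, (Q k i) ^ 2 = ∑ k, Q k i * Q k i := by simp [sq]
      _ = 1 := h
  have hspec_ge : ∀ i, 1 - σ i ^ 2 ≤ spec B ^ 2 := by
    intro i
    have hmv : ∀ k, B.mulVec (fun l => Q l i) k = (B * Q) k i := by
      intro k
      simp [Matrix.mulVec, dotProduct, Matrix.mul_apply]
    have hmem : Real.sqrt (1 - σ i ^ 2) ∈ {c : ℝ | ∃ v : Fin r → ℝ, (∑ j, v j ^ 2) ≤ 1 ∧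
        c = Real.sqrt (∑ k, (B.mulVec v k) ^ 2)} := by
      refine ⟨fun l => Q l i, le_of_eq (hQcol i), ?_⟩
      rw [← hcol i]
      exact (congrArg Real.sqrt (Finset.sum_congr rfl fun k _ => by rw [hmv k])).symm
    have h1 : Real.sqrt (1 - σ i ^ 2) ≤ spec B := le_csSup (spec_bddAbove B) hmem
    have h0 : 0 ≤ 1 - σ i ^ 2 := by rw [← hcol i]; positivity
    calc 1 - σ i ^ 2 = Real.sqrt (1 - σ i ^ 2) ^ 2 := (Real.sq_sqrt h0).symm
      _ ≤ spec B ^ 2 := pow_le_pow_left₀ (Real.sqrt_nonneg _) h1 2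
  have hspec0 : 0 ≤ spec B := spec_nonneg B (spec_bddAbove B)
  have hfB : (∑ i, (1 - σ i ^ 2)) ≤ frob B ^ 2 := by
    rw [frob_sq_eq_trace, hBtB, Matrix.trace_sub, Matrix.trace_one]
    have htr : (Q * Matrix.diagonal (fun i => σ i ^ 2) * Qᵀ).trace = ∑ i, σ i ^ 2 := by
      rw [Matrix.trace_mul_cycle, hQ1, Matrix.one_mul, Matrix.trace_diagonal]
    rw [htr, Finset.sum_sub_distrib]
    simp [Finset.card_univ]
  -- the orthogonal matrix R
  refine ⟨Q * Wᵀ, ?_, ?_, ?_⟩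
  · calc (Q * Wᵀ)ᵀ * (Q * Wᵀ) = W * (Qᵀ * (Q * Wᵀ)) := by
          simp only [Matrix.transpose_mul, Matrix.transpose_transpose, Matrix.mul_assoc]
      _ = 1 := by rw [← Matrix.mul_assoc Qᵀ, hQ1, Matrix.one_mul, hW2]
  · calc (Q * Wᵀ) * (Q * Wᵀ)ᵀ = Q * (Wᵀ * (W * Qᵀ)) := by
          simp only [Matrix.transpose_mul, Matrix.transpose_transpose, Matrix.mul_assoc]
      _ = 1 := by rw [← Matrix.mul_assoc Wᵀ, hW1, Matrix.one_mul, hQ2]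
  · have hAR : A - Q * Wᵀ = Q * Matrix.diagonal (fun i => σ i - 1) * Wᵀ := by
      rw [hA]
      have : Matrix.diagonal (fun i => σ i - 1) = Matrix.diagonal σ - 1 := by
        rw [← Matrix.diagonal_one, Matrix.diagonal_sub]
      rw [this, Matrix.mul_sub, Matrix.sub_mul, Matrix.mul_one]
    have hfAR : frob (A - Q * Wᵀ) ^ 2 = ∑ i, (1 - σ i) ^ 2 := by
      rw [hAR, frob_sq_eq_trace, trace_conj Q W _ hQ1 hW1]
      exact Finset.sum_congr rfl fun i _ => by ring
    have hL : frob (A - Q * Wᵀ) = Real.sqrt (∑ i, (1 - σ i) ^ 2) := by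
      rw [← hfAR, Real.sqrt_sq (frob_nonneg _)]
    have ht0 : ∀ i, 0 ≤ 1 - σ i := fun i => by linarith [hσ1 i]
    have ht1 : ∀ i, 1 - σ i ≤ 1 - σ i ^ 2 := by
      intro i
      nlinarith [hσ0 i, hσ1 i]
    refine le_min ?_ ?_
    · calc frob (A - Q * Wᵀ) = Real.sqrt (∑ i, (1 - σ i) ^ 2) := hL
        _ ≤ Real.sqrt ((∑ i, (1 - σ i)) ^ 2) :=
            Real.sqrt_le_sqrt (Finset.sum_sq_le_sq_sum_of_nonneg fun i _ => ht0 i)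
        _ = ∑ i, (1 - σ i) := Real.sqrt_sq (Finset.sum_nonneg fun i _ => ht0 i)
        _ ≤ ∑ i, (1 - σ i ^ 2) := Finset.sum_le_sum fun i _ => ht1 i
        _ ≤ frob B ^ 2 := hfB
    · have hterm : ∀ i, (1 - σ i) ^ 2 ≤ (spec B ^ 2) ^ 2 := by
        intro i
        have : 1 - σ i ≤ spec B ^ 2 := le_trans (ht1 i) (hspec_ge i)
        exact pow_le_pow_left₀ (ht0 i) this 2
      calc frob (A - Q * Wᵀ) = Real.sqrt (∑ i, (1 - σ i) ^ 2) := hL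
        _ ≤ Real.sqrt (∑ _i : Fin r, (spec B ^ 2) ^ 2) :=
            Real.sqrt_le_sqrt (Finset.sum_le_sum fun i _ => hterm i)
        _ = Real.sqrt ((r : ℝ) * (spec B ^ 2) ^ 2) := by
            rw [Finset.sum_const, Finset.card_univ, Fintype.card_fin, nsmul_eq_mul]
        _ = Real.sqrt r * spec B ^ 2 := by
            rw [Real.sqrt_mul (Nat.cast_nonneg r), Real.sqrt_sq (by positivity)]
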